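/- Let μ⁰/ν⁰ and μ¹/ν¹ be skew shapes (padded to length n) whose skew diagrams have the same connected components, related by a permutation σ ∈ S_n of the rows that is order-preserving within the row indices of each connected component. Then for every w' in the Young subgroup S⁰ associated to μ⁰/ν⁰ (generated by transpositions (i,i+1) with ν⁰_i < μ⁰_{i+1}), the entries satisfy (μ⁰ + δ - w'(ν⁰ + δ))_k = (μ¹ + δ - (σ w' σ^{-1})(ν¹ + δ))_{σ(k)} for all k ∈ [n], so K_{θ, μ⁰+δ-w'(ν⁰+δ)} = K_{θ, μ¹+δ-(σw'σ^{-1})(ν¹+δ)} for all partitions θ. -/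

import Mathlib

open Equiv

/-- `T i j` is the entry of a filling in row `i`, column `j` (0-based);
entries outside the diagram of `shape` are `0`.  Rows weakly increase,
columns strictly increase. -/
def IsSSYT (shape : ℕ → ℕ) (T : ℕ → ℕ → ℕ) : Prop :=
  (∀ i j, j + 1 < shape i → T i j ≤ T i (j + 1)) ∧
  (∀ i j, j < shape (i + 1) → T i j < T (i + 1) j) ∧
  (∀ i j, shape i ≤ j → T i j = 0)

/-- The Kostka number: the number of semistandard Young tableaux of the given
shape in which the entry `m` appears exactly `c m` times. -/
noncomputable def kostka (shape : ℕ → ℕ) (c : ℕ → ℕ) : ℕ :=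
  Set.ncard {T : ℕ → ℕ → ℕ | IsSSYT shape T ∧
    ∀ m : ℕ, {p : ℕ × ℕ | p.2 < shape p.1 ∧ T p.1 p.2 = m}.ncard = c m}

open Classical in
/-- Kostka number for an integer content, with the convention that it is `0`
whenever the content has a negative entry. -/
noncomputable def kostkaZ (shape : ℕ → ℕ) (c : ℕ → ℤ) : ℕ :=
  if ∀ m, 0 ≤ c m then kostka shape (fun m => (c m).toNat) else 0

/-- The hook shape `(N - k, 1, ..., 1)` with `k` trailing rows of length 1. -/
def hookShape (N k : ℕ) : ℕ → ℕ :=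
  fun i => if i = 0 then N - k else if i ≤ k then 1 else 0

/-- Extend a sequence indexed by `Fin n` to all of `ℕ` by zeros. -/
def extendSeq {n : ℕ} (a : Fin n → ℤ) : ℕ → ℤ :=
  fun m => if h : m < n then a ⟨m, h⟩ else 0

/-- The staircase `δ = (n-1, n-2, ..., 1, 0)`. -/
def deltaSeq (n : ℕ) : Fin n → ℤ := fun i => (n : ℤ) - 1 - (i.val : ℤ)

/-- The sequence `μ + δ - w(ν + δ)`, where a permutation acts on sequences by
shuffling: `(w(a))_i = a_{w⁻¹(i)}`. -/
def hatSeq {n : ℕ} (μ ν : Fin n → ℕ) (w : Perm (Fin n)) : Fin n → ℤ :=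
  fun i => ((μ i : ℤ) + deltaSeq n i) - ((ν (w⁻¹ i) : ℤ) + deltaSeq n (w⁻¹ i))

/-- `h` is the Hessenberg function of the skew shape `μ/ν`:
`h j = max { i | μ i - ν j + j - i ≥ 0 }`. -/
def IsHessOf {n : ℕ} (μ ν : Fin n → ℕ) (h : Fin n → Fin n) : Prop :=
  ∀ j : Fin n, (ν j + ((h j : ℕ)) ≤ μ (h j) + (j : ℕ)) ∧
    ∀ i : Fin n, ν j + (i : ℕ) ≤ μ i + (j : ℕ) → i ≤ h j

/-- The indicator `ĥ(w)` of the condition `w(i) ≤ h(i)` for all `i`. -/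
def hhat {n : ℕ} (h : Fin n → Fin n) (w : Perm (Fin n)) : ℕ :=
  if ∀ i, w i ≤ h i then 1 else 0

/-- The modified Hessenberg function `h^J`: `h^J(i) = h(i) - 1` when `i ∈ J` and
`μ_{h(i)} - ν_i + i - h(i) = 0`, and `h^J(i) = h(i)` otherwise. -/
def hJfun {n : ℕ} (μ ν : Fin n → ℕ) (h : Fin n → Fin n) (J : Finset (Fin n)) :
    Fin n → Fin n :=
  fun i => if i ∈ J ∧ μ (h i) + (i : ℕ) = ν i + ((h i : ℕ)) then
      ⟨(h i : ℕ) - 1, Nat.lt_of_le_of_lt (Nat.sub_le _ _) (h i).isLt⟩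
    else h i

open Classical in
/-- The conjugacy class of `w` in the symmetric group, as a finset. -/
noncomputable def conjClass {n : ℕ} (w : Perm (Fin n)) : Finset (Perm (Fin n)) :=
  Finset.univ.filter (fun v => IsConj w v)

/-- The Stanley–Stembridge character
`Γ_h(w) = (n! / |C(w)|) · Σ_{w' ∈ C(w)} ĥ(w')`. -/
noncomputable def GammaH {n : ℕ} (h : Fin n → Fin n) (w : Perm (Fin n)) : ℚ :=
  ((n.factorial : ℚ) / ((conjClass w).card : ℚ)) * ∑ v ∈ conjClass w, (hhat h v : ℚ)

/-- The immanant character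
`Γ^θ_{μ/ν}(w) = (n! / |C(w)|) · Σ_{w' ∈ C(w)} K_{θ, μ+δ-w'(ν+δ)}`. -/
noncomputable def GammaTheta {n : ℕ} (shape : ℕ → ℕ) (μ ν : Fin n → ℕ)
    (w : Perm (Fin n)) : ℚ :=
  ((n.factorial : ℚ) / ((conjClass w).card : ℚ)) *
    ∑ v ∈ conjClass w, (kostkaZ shape (extendSeq (hatSeq μ ν v)) : ℚ)

/-- Rows `s` and `t` lie in the same connected component of the skew diagram of
`μ/ν`: every pair of consecutive rows between them overlaps. -/
def SameComp {n : ℕ} (μ ν : Fin n → ℕ) (s t : Fin n) : Prop :=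
  ∀ r k : Fin n, min s t ≤ r → r < max s t → (k : ℕ) = (r : ℕ) + 1 → ν r < μ k

namespace BK

variable (shape : ℕ → ℕ) (a : ℕ) (T : ℕ → ℕ → ℕ)

/-- number of entries `< a` in row `i` -/
def X (i : ℕ) : ℕ := ((Finset.range (shape i)).filter (fun j => T i j < a)).card
/-- number of entries `≤ a` in row `i` -/
def Y (i : ℕ) : ℕ := ((Finset.range (shape i)).filter (fun j => T i j ≤ a)).card
/-- number of entries `≤ a+1` in row `i` -/
def Z (i : ℕ) : ℕ := ((Finset.range (shape i)).filter (fun j => T i j ≤ a + 1)).card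
/-- start of the free block in row `i` -/
def S (i : ℕ) : ℕ := max (X shape a T i) (Z shape a T (i+1))
/-- end of the free block in row `i` -/
def Tt : ℕ → ℕ
  | 0 => Z shape a T 0
  | (i+1) => min (Z shape a T (i+1)) (X shape a T i)
/-- the Bender–Knuth involution at value `a` -/
def bk : ℕ → ℕ → ℕ := fun i j =>
  if S shape a T i ≤ j ∧ j < Tt shape a T i then
    (if j < S shape a T i + (Tt shape a T i - Y shape a T i) then a else a + 1)
  else T i j

variable {shape a T}
variable (hsh : Antitone shape) (hT : IsSSYT shape T)
include hT

lemma row_mono {i j k : ℕ} (hjk : j ≤ k) (hk : k < shape i) : T i j ≤ T i k := by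
  induction k with
  | zero => interval_cases j; exact le_refl _
  | succ k ih =>
    rcases Nat.eq_or_lt_of_le hjk with rfl | h
    · exact le_refl _
    · exact le_trans (ih (by omega) (by omega)) (hT.1 i k hk)

omit hT in
lemma downward_mem {s : Finset ℕ} (h : ∀ ⦃j k : ℕ⦄, j ≤ k → k ∈ s → j ∈ s) (j : ℕ) :
    j ∈ s ↔ j < s.card := by
  constructor
  · intro hj
    have hsub : Finset.range (j+1) ⊆ s := fun m hm => h (by simpa using Nat.lt_succ_iff.mp (Finset.mem_range.mp hm)) hj
    have := Finset.card_le_card hsub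
    simpa using this
  · intro hj
    by_contra hns
    have hsub : s ⊆ Finset.range j := by
      intro m hm
      simp only [Finset.mem_range]
      by_contra hmj
      exact hns (h (by omega) hm)
    have := Finset.card_le_card hsub
    simp at this; omega

lemma charLe {i j v : ℕ} (hj : j < shape i) :
    T i j ≤ v ↔ j < ((Finset.range (shape i)).filter (fun j => T i j ≤ v)).card := by
  have h : ∀ ⦃j k : ℕ⦄, j ≤ k → k ∈ (Finset.range (shape i)).filter (fun j => T i j ≤ v) →
      j ∈ (Finset.range (shape i)).filter (fun j => T i j ≤ v) := by
    intro j k hjk hk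
    simp only [Finset.mem_filter, Finset.mem_range] at *
    exact ⟨by omega, le_trans (row_mono hT hjk hk.1) hk.2⟩
  rw [← downward_mem h j]
  simp [Finset.mem_filter, Finset.mem_range, hj]

lemma charLt {i j v : ℕ} (hj : j < shape i) :
    T i j < v ↔ j < ((Finset.range (shape i)).filter (fun j => T i j < v)).card := by
  have h : ∀ ⦃j k : ℕ⦄, j ≤ k → k ∈ (Finset.range (shape i)).filter (fun j => T i j < v) →
      j ∈ (Finset.range (shape i)).filter (fun j => T i j < v) := by
    intro j k hjk hk
    simp only [Finset.mem_filter, Finset.mem_range] at *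
    exact ⟨by omega, lt_of_le_of_lt (row_mono hT hjk hk.1) hk.2⟩
  rw [← downward_mem h j]
  simp [Finset.mem_filter, Finset.mem_range, hj]

lemma charX {i j : ℕ} (hj : j < shape i) : T i j < a ↔ j < X shape a T i := charLt hT hj
lemma charY {i j : ℕ} (hj : j < shape i) : T i j ≤ a ↔ j < Y shape a T i := charLe hT hj
lemma charZ {i j : ℕ} (hj : j < shape i) : T i j ≤ a + 1 ↔ j < Z shape a T i := charLe hT hj

omit hT
lemma X_le_Y (i : ℕ) : X shape a T i ≤ Y shape a T i :=
  Finset.card_le_card (Finset.monotone_filter_right _ (fun j _ h => le_of_lt h))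

lemma Y_le_Z (i : ℕ) : Y shape a T i ≤ Z shape a T i :=
  Finset.card_le_card (Finset.monotone_filter_right _ (fun j h => by omega))

lemma Z_le_shape (i : ℕ) : Z shape a T i ≤ shape i := by
  have := Finset.card_filter_le (Finset.range (shape i)) (fun j => T i j ≤ a + 1)
  simpa [Z] using this

include hT
lemma Z_succ_le_Y (hsh : Antitone shape) (i : ℕ) : Z shape a T (i+1) ≤ Y shape a T i := by
  rcases Nat.eq_zero_or_pos (Z shape a T (i+1)) with h | h
  · omega
  · -- show every j < Z (i+1) satisfies j < Y i
    by_contra hc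
    push_neg at hc
    set j := Y shape a T i with hj
    have hjZ : j < Z shape a T (i+1) := hc
    have hjs1 : j < shape (i+1) := lt_of_lt_of_le hjZ (Z_le_shape _)
    have hjs : j < shape i := lt_of_lt_of_le hjs1 (hsh (Nat.le_succ i))
    have h1 : T (i+1) j ≤ a + 1 := (charZ (a := a) hT hjs1).mpr hjZ
    have h2 : T i j < T (i+1) j := hT.2.1 i j hjs1
    have h3 : T i j ≤ a := by omega
    have := (charY (a := a) hT hjs).mp h3
    omega

lemma Y_succ_le_X (hsh : Antitone shape) (i : ℕ) : Y shape a T (i+1) ≤ X shape a T i := by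
  by_contra hc
  push_neg at hc
  set j := X shape a T i with hj
  have hjY : j < Y shape a T (i+1) := hc
  have hjs1 : j < shape (i+1) := lt_of_lt_of_le hjY ((Y_le_Z _).trans (Z_le_shape _))
  have hjs : j < shape i := lt_of_lt_of_le hjs1 (hsh (Nat.le_succ i))
  have h1 : T (i+1) j ≤ a := (charY (a := a) hT hjs1).mpr hjY
  have h2 : T i j < T (i+1) j := hT.2.1 i j hjs1
  have h3 : T i j < a := by omega
  have := (charX (a := a) hT hjs).mp h3
  omega

lemma S_le_Y (hsh : Antitone shape) (i : ℕ) : S shape a T i ≤ Y shape a T i :=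
  max_le (X_le_Y _) (Z_succ_le_Y hT hsh i)

lemma Y_le_Tt (hsh : Antitone shape) (i : ℕ) : Y shape a T i ≤ Tt shape a T i := by
  cases i with
  | zero => exact Y_le_Z _
  | succ i => exact le_min (Y_le_Z _) (Y_succ_le_X hT hsh i)

omit hT
lemma Tt_le_Z (i : ℕ) : Tt shape a T i ≤ Z shape a T i := by
  cases i with
  | zero => exact le_refl _
  | succ i => exact min_le_left _ _

lemma X_le_S (i : ℕ) : X shape a T i ≤ S shape a T i := le_max_left _ _

lemma Tt_le_shape (i : ℕ) : Tt shape a T i ≤ shape i := (Tt_le_Z i).trans (Z_le_shape i)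

variable (shape a T) in
/-- the end of the new `a`-region -/
def Yp (i : ℕ) : ℕ := S shape a T i + (Tt shape a T i - Y shape a T i)

include hT
variable (hsh : Antitone shape)
include hsh

lemma S_le_Yp (i : ℕ) : S shape a T i ≤ Yp shape a T i := Nat.le_add_right _ _

lemma Yp_le_Tt (i : ℕ) : Yp shape a T i ≤ Tt shape a T i := by
  have h1 := S_le_Y (a := a) (hsh := hsh) (hT := hT) i
  have h2 := Y_le_Tt (a := a) (hsh := hsh) (hT := hT) i
  unfold Yp; omega

-- Layout of `bk` along row `i` (for `j < shape i`).
lemma bk_lt_X {i j : ℕ} (hj : j < shape i) (h : j < X shape a T i) :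
    bk shape a T i j = T i j ∧ T i j < a := by
  have hS := X_le_S (shape := shape) (a := a) (T := T) i
  constructor
  · unfold bk; rw [if_neg (by omega)]
  · exact (charX (a := a) (hT := hT) hj).mpr h

lemma bk_eq_a {i j : ℕ} (hj : j < shape i) (h1 : X shape a T i ≤ j) (h2 : j < Yp shape a T i) :
    bk shape a T i j = a := by
  rcases lt_or_ge j (S shape a T i) with hS | hS
  · have hjY : j < Y shape a T i := lt_of_lt_of_le hS (S_le_Y (a := a) (hsh := hsh) (hT := hT) i)
    have hTa : T i j = a := by
      have := (charY (a := a) (hT := hT) hj).mpr hjY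
      have := (charX (a := a) (hT := hT) hj)
      omega
    unfold bk; rw [if_neg (by omega)]; exact hTa
  · have hTt : j < Tt shape a T i := lt_of_lt_of_le h2 (Yp_le_Tt (a := a) (hsh := hsh) (hT := hT) i)
    unfold bk; rw [if_pos ⟨hS, hTt⟩, if_pos (by unfold Yp at h2; omega)]

lemma bk_eq_a1 {i j : ℕ} (hj : j < shape i) (h1 : Yp shape a T i ≤ j) (h2 : j < Z shape a T i) :
    bk shape a T i j = a + 1 := by
  rcases lt_or_ge j (Tt shape a T i) with hTt | hTt
  · have hS : S shape a T i ≤ j := le_trans (S_le_Yp (a := a) (hsh := hsh) (hT := hT) i) h1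
    unfold bk; rw [if_pos ⟨hS, hTt⟩, if_neg (by unfold Yp at h1; omega)]
  · have hY : Y shape a T i ≤ j := le_trans (Y_le_Tt (a := a) (hsh := hsh) (hT := hT) i) hTt
    have hTa : T i j = a + 1 := by
      have hz := (charZ (a := a) (hT := hT) hj).mpr h2
      have hy := (charY (a := a) (hT := hT) hj)
      omega
    unfold bk; rw [if_neg (by omega)]; exact hTa

lemma bk_ge_Z {i j : ℕ} (h : Z shape a T i ≤ j) :
    bk shape a T i j = T i j := by
  have := Tt_le_Z (shape := shape) (a := a) (T := T) i
  unfold bk; rw [if_neg (by omega)]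

lemma bk_gt_a1 {i j : ℕ} (hj : j < shape i) (h : Z shape a T i ≤ j) :
    a + 1 < bk shape a T i j := by
  rw [bk_ge_Z (a := a) (hsh := hsh) (hT := hT) h]
  have := (charZ (a := a) (hT := hT) hj)
  omega

-- the value characterisation for `bk`
lemma bk_char {i j : ℕ} (hj : j < shape i) :
    (bk shape a T i j < a ↔ j < X shape a T i) ∧
    (bk shape a T i j ≤ a ↔ j < Yp shape a T i) ∧
    (bk shape a T i j ≤ a + 1 ↔ j < Z shape a T i) := by
  have hXYp : X shape a T i ≤ Yp shape a T i := le_trans (X_le_S i) (S_le_Yp (a := a) (hsh := hsh) (hT := hT) i)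
  have hYpZ : Yp shape a T i ≤ Z shape a T i := le_trans (Yp_le_Tt (a := a) (hsh := hsh) (hT := hT) i) (Tt_le_Z i)
  rcases lt_or_ge j (X shape a T i) with h1 | h1
  · obtain ⟨he, hv⟩ := bk_lt_X (a := a) (hsh := hsh) (hT := hT) hj h1
    refine ⟨?_, ?_, ?_⟩ <;> constructor <;> intro <;> omega
  rcases lt_or_ge j (Yp shape a T i) with h2 | h2
  · have he := bk_eq_a (a := a) (hsh := hsh) (hT := hT) hj h1 h2
    refine ⟨?_, ?_, ?_⟩ <;> constructor <;> intro <;> omega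
  rcases lt_or_ge j (Z shape a T i) with h3 | h3
  · have he := bk_eq_a1 (a := a) (hsh := hsh) (hT := hT) hj h2 h3
    refine ⟨?_, ?_, ?_⟩ <;> constructor <;> intro <;> omega
  · have he := bk_gt_a1 (a := a) (hsh := hsh) (hT := hT) hj h3
    refine ⟨?_, ?_, ?_⟩ <;> constructor <;> intro <;> omega

lemma bk_ssyt : IsSSYT shape (bk shape a T) := by
  have hXYp : ∀ i, X shape a T i ≤ Yp shape a T i :=
    fun i => le_trans (X_le_S i) (S_le_Yp (a := a) (hsh := hsh) (hT := hT) i)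
  have hYpZ : ∀ i, Yp shape a T i ≤ Z shape a T i :=
    fun i => le_trans (Yp_le_Tt (a := a) (hsh := hsh) (hT := hT) i) (Tt_le_Z i)
  refine ⟨?_, ?_, ?_⟩
  · -- rows weakly increase
    intro i j hj1
    have hj : j < shape i := by omega
    have cj := bk_char (a := a) (hsh := hsh) (hT := hT) hj
    have cj1 := bk_char (a := a) (hsh := hsh) (hT := hT) hj1
    rcases lt_or_ge (j+1) (X shape a T i) with h1 | h1
    · obtain ⟨e1, _⟩ := bk_lt_X (a := a) (hsh := hsh) (hT := hT) hj1 h1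
      obtain ⟨e0, _⟩ := bk_lt_X (a := a) (hsh := hsh) (hT := hT) hj (by omega)
      rw [e0, e1]; exact hT.1 i j hj1
    rcases lt_or_ge (j+1) (Yp shape a T i) with h2 | h2
    · rw [bk_eq_a (a := a) (hsh := hsh) (hT := hT) hj1 h1 h2]
      exact cj.2.1.mpr (by omega)
    rcases lt_or_ge (j+1) (Z shape a T i) with h3 | h3
    · rw [bk_eq_a1 (a := a) (hsh := hsh) (hT := hT) hj1 h2 h3]
      exact cj.2.2.mpr (by omega)
    · rw [bk_ge_Z (a := a) (hT := hT) (hsh := hsh) h3]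
      rcases lt_or_ge j (Z shape a T i) with h4 | h4
      · have : a + 1 < T i (j+1) := by
          have := (charZ (a := a) (hT := hT) hj1); omega
        have := cj.2.2.mpr h4
        omega
      · rw [bk_ge_Z (a := a) (hT := hT) (hsh := hsh) h4]; exact hT.1 i j hj1
  · -- columns strictly increase
    intro i j hj1
    have hj : j < shape i := lt_of_lt_of_le hj1 (hsh (Nat.le_succ i))
    have cj := bk_char (a := a) (hsh := hsh) (hT := hT) hj
    have cj1 := bk_char (a := a) (hsh := hsh) (hT := hT) hj1
    rcases lt_or_ge j (X shape a T i) with h1 | h1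
    · obtain ⟨e0, hv⟩ := bk_lt_X (a := a) (hsh := hsh) (hT := hT) hj h1
      rw [e0]
      rcases lt_or_ge j (X shape a T (i+1)) with h1' | h1'
      · obtain ⟨e1, _⟩ := bk_lt_X (a := a) (hsh := hsh) (hT := hT) hj1 h1'
        rw [e1]; exact hT.2.1 i j hj1
      · have : a ≤ bk shape a T (i+1) j := by
          have := (bk_char (a := a) (hsh := hsh) (hT := hT) hj1).1; omega
        omega
    rcases lt_or_ge j (Yp shape a T i) with h2 | h2
    · rw [bk_eq_a (a := a) (hsh := hsh) (hT := hT) hj h1 h2]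
      have hYpX : Yp shape a T (i+1) ≤ X shape a T i :=
        le_trans (Yp_le_Tt (a := a) (hsh := hsh) (hT := hT) (i+1)) (min_le_right _ _)
      have : a + 1 ≤ bk shape a T (i+1) j := by
        have := (bk_char (a := a) (hsh := hsh) (hT := hT) hj1).2.1; omega
      omega
    rcases lt_or_ge j (Z shape a T i) with h3 | h3
    · rw [bk_eq_a1 (a := a) (hsh := hsh) (hT := hT) hj h2 h3]
      have hZS : Z shape a T (i+1) ≤ S shape a T i := le_max_right _ _
      have hSYp : S shape a T i ≤ Yp shape a T i := S_le_Yp (a := a) (hsh := hsh) (hT := hT) i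
      exact bk_gt_a1 (a := a) (hsh := hsh) (hT := hT) hj1 (by omega)
    · rw [bk_ge_Z (a := a) (hT := hT) (hsh := hsh) h3]
      have hZZ : Z shape a T (i+1) ≤ Z shape a T i :=
        le_trans (Z_succ_le_Y (a := a) (hsh := hsh) (hT := hT) i) (Y_le_Z i)
      rw [bk_ge_Z (a := a) (hT := hT) (hsh := hsh) (by omega)]
      exact hT.2.1 i j hj1
  · -- zeros outside
    intro i j hj
    have h1 : Tt shape a T i ≤ j := le_trans (Tt_le_shape i) hj
    have h2 : ¬ (S shape a T i ≤ j ∧ j < Tt shape a T i) := by omega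
    unfold bk; rw [if_neg h2]; exact hT.2.2 i j hj

lemma X_bk (i : ℕ) : X shape a (bk shape a T) i = X shape a T i := by
  have hXs : X shape a T i ≤ shape i :=
    le_trans (X_le_Y i) (le_trans (Y_le_Z i) (Z_le_shape i))
  unfold X
  rw [show (Finset.range (shape i)).filter (fun j => bk shape a T i j < a)
      = Finset.range (X shape a T i) from ?_]
  · exact Finset.card_range _
  · ext j
    simp only [Finset.mem_filter, Finset.mem_range]
    constructor
    · rintro ⟨h1, h2⟩
      exact ((bk_char (a := a) (hsh := hsh) (hT := hT) h1).1).mp h2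
    · intro h
      have hj : j < shape i := by omega
      exact ⟨hj, ((bk_char (a := a) (hsh := hsh) (hT := hT) hj).1).mpr h⟩

lemma Y_bk (i : ℕ) : Y shape a (bk shape a T) i = Yp shape a T i := by
  have hs : Yp shape a T i ≤ shape i :=
    le_trans (Yp_le_Tt (a := a) (hsh := hsh) (hT := hT) i) (Tt_le_shape i)
  unfold Y
  rw [show (Finset.range (shape i)).filter (fun j => bk shape a T i j ≤ a)
      = Finset.range (Yp shape a T i) from ?_]
  · exact Finset.card_range _
  · ext j
    simp only [Finset.mem_filter, Finset.mem_range]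
    constructor
    · rintro ⟨h1, h2⟩
      exact ((bk_char (a := a) (hsh := hsh) (hT := hT) h1).2.1).mp h2
    · intro h
      have hj : j < shape i := by omega
      exact ⟨hj, ((bk_char (a := a) (hsh := hsh) (hT := hT) hj).2.1).mpr h⟩

lemma Z_bk (i : ℕ) : Z shape a (bk shape a T) i = Z shape a T i := by
  have hs : Z shape a T i ≤ shape i := Z_le_shape i
  unfold Z
  rw [show (Finset.range (shape i)).filter (fun j => bk shape a T i j ≤ a + 1)
      = Finset.range (Z shape a T i) from ?_]
  · exact Finset.card_range _
  · ext j
    simp only [Finset.mem_filter, Finset.mem_range]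
    constructor
    · rintro ⟨h1, h2⟩
      exact ((bk_char (a := a) (hsh := hsh) (hT := hT) h1).2.2).mp h2
    · intro h
      have hj : j < shape i := by omega
      exact ⟨hj, ((bk_char (a := a) (hsh := hsh) (hT := hT) hj).2.2).mpr h⟩

lemma S_bk (i : ℕ) : S shape a (bk shape a T) i = S shape a T i := by
  unfold S; rw [X_bk (a := a) (hsh := hsh) (hT := hT), Z_bk (a := a) (hsh := hsh) (hT := hT)]

lemma Tt_bk (i : ℕ) : Tt shape a (bk shape a T) i = Tt shape a T i := by
  cases i with
  | zero => show Z _ _ _ 0 = Z _ _ _ 0; exact Z_bk (a := a) (hsh := hsh) (hT := hT) 0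
  | succ i =>
    show min _ _ = min _ _
    rw [X_bk (a := a) (hsh := hsh) (hT := hT), Z_bk (a := a) (hsh := hsh) (hT := hT)]

lemma bk_bk : bk shape a (bk shape a T) = T := by
  funext i j
  have hS := S_bk (a := a) (hsh := hsh) (hT := hT) i
  have hTt := Tt_bk (a := a) (hsh := hsh) (hT := hT) i
  have hY := Y_bk (a := a) (hsh := hsh) (hT := hT) i
  have h1 : S shape a T i ≤ Y shape a T i := S_le_Y (a := a) (hsh := hsh) (hT := hT) i
  have h2 : Y shape a T i ≤ Tt shape a T i := Y_le_Tt (a := a) (hsh := hsh) (hT := hT) i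
  show (if S shape a (bk shape a T) i ≤ j ∧ j < Tt shape a (bk shape a T) i then _ else _) = T i j
  rw [hS, hTt, hY]
  by_cases hb : S shape a T i ≤ j ∧ j < Tt shape a T i
  · rw [if_pos hb]
    have harith : S shape a T i + (Tt shape a T i - Yp shape a T i) = Y shape a T i := by
      unfold Yp; omega
    rw [harith]
    have hj : j < shape i := lt_of_lt_of_le hb.2 (Tt_le_shape i)
    by_cases hc : j < Y shape a T i
    · rw [if_pos hc]
      have hXj : X shape a T i ≤ j := le_trans (X_le_S i) hb.1
      have := (charY (a := a) (hT := hT) hj).mpr hc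
      have := (charX (a := a) (hT := hT) hj)
      omega
    · rw [if_neg hc]
      push_neg at hc
      have hZj : j < Z shape a T i := lt_of_lt_of_le hb.2 (Tt_le_Z i)
      have := (charZ (a := a) (hT := hT) hj).mpr hZj
      have := (charY (a := a) (hT := hT) hj)
      omega
  · rw [if_neg hb]
    unfold bk
    rw [if_neg hb]

omit hsh in
lemma T_eq_a_iff {i j : ℕ} (hj : j < shape i) :
    T i j = a ↔ X shape a T i ≤ j ∧ j < Y shape a T i := by
  have h1 := charX (a := a) (hT := hT) hj
  have h2 := charY (a := a) (hT := hT) hj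
  omega

omit hsh in
lemma T_eq_a1_iff {i j : ℕ} (hj : j < shape i) :
    T i j = a + 1 ↔ Y shape a T i ≤ j ∧ j < Z shape a T i := by
  have h1 := charY (a := a) (hT := hT) hj
  have h2 := charZ (a := a) (hT := hT) hj
  omega

lemma bk_eq_a_iff {i j : ℕ} (hj : j < shape i) :
    bk shape a T i j = a ↔ X shape a T i ≤ j ∧ j < Yp shape a T i := by
  have h := bk_char (a := a) (hsh := hsh) (hT := hT) hj
  omega

lemma bk_eq_a1_iff {i j : ℕ} (hj : j < shape i) :
    bk shape a T i j = a + 1 ↔ Yp shape a T i ≤ j ∧ j < Z shape a T i := by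
  have h := bk_char (a := a) (hsh := hsh) (hT := hT) hj
  omega

/-- cells of `bk T` with entries not in `{a, a+1}` are unchanged -/
lemma cells_bk_ne {v : ℕ} (hva : v ≠ a) (hva1 : v ≠ a + 1) :
    {p : ℕ × ℕ | p.2 < shape p.1 ∧ bk shape a T p.1 p.2 = v}
      = {p : ℕ × ℕ | p.2 < shape p.1 ∧ T p.1 p.2 = v} := by
  ext ⟨i, j⟩
  simp only [Set.mem_setOf_eq]
  constructor
  · rintro ⟨hj, hv⟩
    refine ⟨hj, ?_⟩
    by_cases hb : S shape a T i ≤ j ∧ j < Tt shape a T i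
    · exfalso
      unfold bk at hv
      rw [if_pos hb] at hv
      by_cases h : j < S shape a T i + (Tt shape a T i - Y shape a T i)
      · rw [if_pos h] at hv; exact hva hv.symm
      · rw [if_neg h] at hv; exact hva1 hv.symm
    · unfold bk at hv; rwa [if_neg hb] at hv
  · rintro ⟨hj, hv⟩
    refine ⟨hj, ?_⟩
    by_cases hb : S shape a T i ≤ j ∧ j < Tt shape a T i
    · exfalso
      -- in the block, T's value is a or a+1
      have hXj : X shape a T i ≤ j := le_trans (X_le_S i) hb.1
      have hZj : j < Z shape a T i := lt_of_lt_of_le hb.2 (Tt_le_Z i)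
      have h1 := charX (a := a) (hT := hT) hj
      have h2 := charZ (a := a) (hT := hT) hj
      have : T i j = a ∨ T i j = a + 1 := by omega
      rcases this with h | h
      · exact hva (h ▸ hv.symm ▸ rfl)
      · exact hva1 (h ▸ hv.symm ▸ rfl)
    · unfold bk; rwa [if_neg hb]

lemma cells_bk_a :
    {p : ℕ × ℕ | p.2 < shape p.1 ∧ bk shape a T p.1 p.2 = a}.ncard
      = {p : ℕ × ℕ | p.2 < shape p.1 ∧ T p.1 p.2 = a + 1}.ncard := by
  classical
  set A := {p : ℕ × ℕ | p.2 < shape p.1 ∧ bk shape a T p.1 p.2 = a} with hA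
  set B := {p : ℕ × ℕ | p.2 < shape p.1 ∧ T p.1 p.2 = a + 1} with hB
  set Φ : ℕ × ℕ → ℕ × ℕ := fun p =>
    if p.2 < S shape a T p.1 then (p.1 + 1, p.2)
    else (p.1, p.2 + (Y shape a T p.1 - S shape a T p.1)) with hPhi
  -- basic inequalities, for all rows
  have hSY : ∀ i, S shape a T i ≤ Y shape a T i := S_le_Y (a := a) (hsh := hsh) (hT := hT)
  have hYT : ∀ i, Y shape a T i ≤ Tt shape a T i := Y_le_Tt (a := a) (hsh := hsh) (hT := hT)
  have hTZ : ∀ i, Tt shape a T i ≤ Z shape a T i := fun i => Tt_le_Z i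
  have hZs : ∀ i, Z shape a T i ≤ shape i := fun i => Z_le_shape i
  have hXS : ∀ i, X shape a T i ≤ S shape a T i := fun i => X_le_S i
  have hYpdef : ∀ i, Yp shape a T i = S shape a T i + (Tt shape a T i - Y shape a T i) :=
    fun i => rfl
  have hTtX : ∀ i, Tt shape a T (i+1) ≤ X shape a T i := fun i => min_le_right _ _
  have hZS : ∀ i, Z shape a T (i+1) ≤ S shape a T i := fun i => le_max_right _ _
  have hTtmin : ∀ i, Tt shape a T (i+1) = min (Z shape a T (i+1)) (X shape a T i) :=
    fun i => rfl
  -- membership in A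
  have memA : ∀ i j, (i, j) ∈ A ↔
      j < shape i ∧ X shape a T i ≤ j ∧ j < Yp shape a T i := by
    intro i j
    simp only [hA, Set.mem_setOf_eq]
    constructor
    · rintro ⟨h1, h2⟩
      exact ⟨h1, (bk_eq_a_iff (a := a) (hsh := hsh) (hT := hT) h1).mp h2⟩
    · rintro ⟨h1, h2⟩
      exact ⟨h1, (bk_eq_a_iff (a := a) (hsh := hsh) (hT := hT) h1).mpr h2⟩
  have memB : ∀ i j, (i, j) ∈ B ↔
      j < shape i ∧ Y shape a T i ≤ j ∧ j < Z shape a T i := by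
    intro i j
    simp only [hB, Set.mem_setOf_eq]
    constructor
    · rintro ⟨h1, h2⟩
      exact ⟨h1, (T_eq_a1_iff (a := a) (hT := hT) h1).mp h2⟩
    · rintro ⟨h1, h2⟩
      exact ⟨h1, (T_eq_a1_iff (a := a) (hT := hT) h1).mpr h2⟩
  -- if j < S i and X i ≤ j then j < Z (i+1)
  have hlocked : ∀ i j, X shape a T i ≤ j → j < S shape a T i → j < Z shape a T (i+1) := by
    intro i j h1 h2
    rcases max_cases (X shape a T i) (Z shape a T (i+1)) with ⟨he, hc⟩ | ⟨he, hc⟩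
    · unfold S at h2; omega
    · unfold S at h2; omega
  have hbij : Set.BijOn Φ A B := by
    refine ⟨?_, ?_, ?_⟩
    · -- maps to
      rintro ⟨i, j⟩ hp
      obtain ⟨h1, h2, h3⟩ := (memA i j).mp hp
      by_cases hc : j < S shape a T i
      · have hZ1 : j < Z shape a T (i+1) := hlocked i j h2 hc
        have hj1 : j < shape (i+1) := lt_of_lt_of_le hZ1 (hZs (i+1))
        have hcol : T i j < T (i+1) j := hT.2.1 i j hj1
        have hTa : T i j = a := by
          have := (T_eq_a_iff (a := a) (hT := hT) h1)
          have := hSY i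
          omega
        have hle : T (i+1) j ≤ a + 1 := (charZ (a := a) (hT := hT) hj1).mpr hZ1
        have : Φ (i, j) = (i + 1, j) := by simp [hPhi, hc]
        rw [this, memB]
        refine ⟨hj1, ?_, hZ1⟩
        have := (T_eq_a1_iff (a := a) (hT := hT) hj1)
        omega
      · push_neg at hc
        set j' := j + (Y shape a T i - S shape a T i) with hj'
        have hj'Y : Y shape a T i ≤ j' := by have := hSY i; omega
        have hj'T : j' < Tt shape a T i := by
          have := hYpdef i; have := hSY i; have := hYT i; omega
        have : Φ (i, j) = (i, j') := by simp [hPhi, not_lt.mpr hc, hj']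
        rw [this, memB]
        have hj'Z : j' < Z shape a T i := lt_of_lt_of_le hj'T (hTZ i)
        exact ⟨lt_of_lt_of_le hj'Z (hZs i), hj'Y, hj'Z⟩
    · -- injective
      rintro ⟨i, j⟩ hp ⟨i', j'⟩ hq heq
      obtain ⟨p1, p2, p3⟩ := (memA i j).mp hp
      obtain ⟨q1, q2, q3⟩ := (memA i' j').mp hq
      by_cases hc : j < S shape a T i <;> by_cases hc' : j' < S shape a T i'
      · simp [hPhi, hc, hc'] at heq
        simp [heq.1, heq.2]
      · -- mixed: p first branch, q second branch
        exfalso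
        simp [hPhi, hc, not_lt.mpr (not_lt.mp hc')] at heq
        -- heq : i + 1 = i' ∧ j = j' + (Y i' - S i')
        obtain ⟨hi, hj⟩ := heq
        subst hi
        have h4 : j' + (Y shape a T (i+1) - S shape a T (i+1)) < Tt shape a T (i+1) := by
          have := hYpdef (i+1); have := hSY (i+1); have := hYT (i+1); omega
        have := hTtX i
        omega
      · exfalso
        simp [hPhi, not_lt.mpr (not_lt.mp hc), hc'] at heq
        obtain ⟨hi, hj⟩ := heq
        subst hi
        have h4 : j + (Y shape a T (i'+1) - S shape a T (i'+1)) < Tt shape a T (i'+1) := by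
          have := hYpdef (i'+1); have := hSY (i'+1); have := hYT (i'+1); omega
        have := hTtX i'
        omega
      · simp [hPhi, not_lt.mpr (not_lt.mp hc), not_lt.mpr (not_lt.mp hc')] at heq
        obtain ⟨hi, hj⟩ := heq
        subst hi
        simp only [Prod.mk.injEq]
        exact ⟨trivial, by omega⟩
    · -- surjective
      rintro ⟨i, j⟩ hq
      obtain ⟨h1, h2, h3⟩ := (memB i j).mp hq
      cases i with
      | zero =>
        refine ⟨(0, j - (Y shape a T 0 - S shape a T 0)), ?_, ?_⟩
        · rw [memA]
          have hT0 : Tt shape a T 0 = Z shape a T 0 := rfl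
          have := hSY 0; have := hYT 0; have := hYpdef 0; have := hXS 0
          refine ⟨by omega, by omega, by omega⟩
        · have := hSY 0; have := hYT 0
          have hns : ¬ (j - (Y shape a T 0 - S shape a T 0) < S shape a T 0) := by omega
          simp only [hPhi, hns, if_neg, if_false]
          simp
          omega
      | succ i' =>
        by_cases hc : X shape a T i' ≤ j
        · refine ⟨(i', j), ?_, ?_⟩
          · rw [memA]
            have hjS : j < S shape a T i' := lt_of_lt_of_le h3 (hZS i')
            have hjs : j < shape i' := lt_of_lt_of_le h1 (hsh (Nat.le_succ i'))
            exact ⟨hjs, hc, lt_of_lt_of_le hjS (S_le_Yp (a := a) (hsh := hsh) (hT := hT) i')⟩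
          · have hjS : j < S shape a T i' := lt_of_lt_of_le h3 (hZS i')
            simp [hPhi, hjS]
        · push_neg at hc
          refine ⟨(i'+1, j - (Y shape a T (i'+1) - S shape a T (i'+1))), ?_, ?_⟩
          · rw [memA]
            have hjT : j < Tt shape a T (i'+1) := by rw [hTtmin]; omega
            have := hSY (i'+1); have := hYT (i'+1); have := hYpdef (i'+1)
            have := hXS (i'+1)
            refine ⟨by omega, by omega, by omega⟩
          · have := hSY (i'+1); have := hYT (i'+1)
            have hns : ¬ (j - (Y shape a T (i'+1) - S shape a T (i'+1)) < S shape a T (i'+1)) := by omega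
            simp only [hPhi, hns, if_neg, if_false]
            simp
            omega
  rw [← hbij.image_eq, Set.ncard_image_of_injOn hbij.injOn]

lemma content_bk (m : ℕ) :
    {p : ℕ × ℕ | p.2 < shape p.1 ∧ bk shape a T p.1 p.2 = m}.ncard
      = {p : ℕ × ℕ | p.2 < shape p.1 ∧ T p.1 p.2 = Equiv.swap a (a+1) m}.ncard := by
  rcases eq_or_ne m a with rfl | hma
  · rw [Equiv.swap_apply_left]
    exact cells_bk_a (a := m) (hsh := hsh) (hT := hT)
  rcases eq_or_ne m (a+1) with rfl | hma1
  · rw [Equiv.swap_apply_right]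
    have h := cells_bk_a (a := a) (T := bk shape a T) (hsh := hsh)
      (hT := bk_ssyt (a := a) (hsh := hsh) (hT := hT))
    rw [bk_bk (a := a) (hsh := hsh) (hT := hT)] at h
    exact h.symm
  · rw [Equiv.swap_apply_of_ne_of_ne hma hma1,
      cells_bk_ne (a := a) (hsh := hsh) (hT := hT) hma hma1]

end BK

lemma kostka_swap_adj (shape : ℕ → ℕ) (hsh : Antitone shape) (a : ℕ) (c : ℕ → ℕ) :
    kostka shape (fun m => c (Equiv.swap a (a+1) m)) = kostka shape c := by
  classical
  unfold kostka
  set cs : ℕ → ℕ := fun m => c (Equiv.swap a (a+1) m) with hcs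
  set SetB := {T : ℕ → ℕ → ℕ | IsSSYT shape T ∧
    ∀ m : ℕ, {p : ℕ × ℕ | p.2 < shape p.1 ∧ T p.1 p.2 = m}.ncard = cs m} with hSB
  set SetA := {T : ℕ → ℕ → ℕ | IsSSYT shape T ∧
    ∀ m : ℕ, {p : ℕ × ℕ | p.2 < shape p.1 ∧ T p.1 p.2 = m}.ncard = c m} with hSA
  have hmapsBA : ∀ T ∈ SetB, BK.bk shape a T ∈ SetA := by
    rintro T ⟨hT, hc⟩
    refine ⟨BK.bk_ssyt (a := a) (hsh := hsh) (hT := hT), fun m => ?_⟩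
    rw [BK.content_bk (a := a) (hsh := hsh) (hT := hT) m, hc]
    simp only [hcs, Equiv.swap_apply_self]
  have hmapsAB : ∀ T ∈ SetA, BK.bk shape a T ∈ SetB := by
    rintro T ⟨hT, hc⟩
    exact ⟨BK.bk_ssyt (a := a) (hsh := hsh) (hT := hT), fun m =>
      by rw [BK.content_bk (a := a) (hsh := hsh) (hT := hT) m, hc]⟩
  have hbij : Set.BijOn (BK.bk shape a) SetB SetA := by
    refine ⟨hmapsBA, ?_, ?_⟩
    · intro T hTm T' hTm' he
      calc T = BK.bk shape a (BK.bk shape a T) :=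
            (BK.bk_bk (a := a) (hsh := hsh) (hT := hTm.1)).symm
        _ = BK.bk shape a (BK.bk shape a T') := by rw [he]
        _ = T' := BK.bk_bk (a := a) (hsh := hsh) (hT := hTm'.1)
    · intro T hTm
      exact ⟨BK.bk shape a T, hmapsAB T hTm,
        BK.bk_bk (a := a) (hsh := hsh) (hT := hTm.1)⟩
  rw [← hbij.image_eq, Set.ncard_image_of_injOn hbij.injOn]

lemma kostka_swap_dist (shape : ℕ → ℕ) (hsh : Antitone shape) :
    ∀ (d v : ℕ) (c : ℕ → ℕ),
      kostka shape (fun m => c (Equiv.swap v (v + d + 1) m)) = kostka shape c := by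
  intro d
  induction d with
  | zero => intro v c; exact kostka_swap_adj shape hsh v c
  | succ d ih =>
    intro v c
    rw [show v + (d + 1) + 1 = v + d + 1 + 1 from by omega]
    have hv1 : (v : ℕ) ≠ v + d + 1 := by omega
    have hv2 : (v : ℕ) ≠ v + d + 2 := by omega
    have hkey : Equiv.swap v (v + d + 1 + 1)
        = Equiv.swap (v + d + 1) (v + d + 2) * Equiv.swap v (v + d + 1)
            * Equiv.swap (v + d + 1) (v + d + 2) := by
      have h := Equiv.swap_apply_apply (Equiv.swap (v + d + 1) (v + d + 2)) v (v + d + 1)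
      rw [Equiv.swap_apply_of_ne_of_ne hv1 hv2, Equiv.swap_apply_left] at h
      rw [show (v + d + 1 + 1) = v + d + 2 from rfl, h, Equiv.swap_inv]
    have hfun : (fun m => c (Equiv.swap v (v + d + 1 + 1) m))
        = fun m => (fun m' => c (Equiv.swap (v + d + 1) ((v + d + 1) + 1) m'))
            (Equiv.swap v (v + d + 1) (Equiv.swap (v + d + 1) ((v + d + 1) + 1) m)) := by
      funext m
      rw [hkey]
      simp [Equiv.Perm.mul_apply]
    rw [hfun]
    rw [kostka_swap_adj shape hsh (v + d + 1)
      (fun m => (fun m' => c (Equiv.swap (v+d+1) ((v+d+1)+1) m')) (Equiv.swap v (v+d+1) m))]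
    rw [ih v (fun m' => c (Equiv.swap (v + d + 1) ((v + d + 1) + 1) m'))]
    exact kostka_swap_adj shape hsh (v + d + 1) c

lemma kostka_swap_any (shape : ℕ → ℕ) (hsh : Antitone shape) (v w : ℕ) (c : ℕ → ℕ) :
    kostka shape (fun m => c (Equiv.swap v w m)) = kostka shape c := by
  rcases lt_trichotomy v w with h | rfl | h
  · obtain ⟨d, rfl⟩ : ∃ d, w = v + d + 1 := ⟨w - v - 1, by omega⟩
    exact kostka_swap_dist shape hsh d v c
  · have : (fun m => c (Equiv.swap v v m)) = c := by
      funext m; rw [Equiv.swap_self]; rfl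
    rw [this]
  · obtain ⟨d, rfl⟩ : ∃ d, v = w + d + 1 := ⟨v - w - 1, by omega⟩
    have : (fun m => c (Equiv.swap (w + d + 1) w m)) = (fun m => c (Equiv.swap w (w + d + 1) m)) := by
      rw [Equiv.swap_comm]
    rw [this]
    exact kostka_swap_dist shape hsh d w c

lemma kostka_perm (shape : ℕ → ℕ) (hsh : Antitone shape) :
    ∀ (N : ℕ) (π : Equiv.Perm ℕ), (∀ m, π m ≠ m → m < N) →
      ∀ c : ℕ → ℕ, kostka shape (fun m => c (π m)) = kostka shape c := by
  intro N
  induction N with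
  | zero =>
    intro π hπ c
    have : ∀ m, π m = m := fun m => by
      by_contra h; exact absurd (hπ m h) (by omega)
    have : (fun m => c (π m)) = c := funext fun m => by rw [this m]
    rw [this]
  | succ N ih =>
    intro π hπ c
    have hπN : π N ≤ N := by
      by_contra h
      push_neg at h
      have h1 : π (π N) = π N := by
        by_contra h2
        have := hπ (π N) h2; omega
      have := π.injective h1
      omega
    set ρ : Equiv.Perm ℕ := Equiv.swap N (π N) * π with hρ
    have hρsupp : ∀ m, ρ m ≠ m → m < N := by
      intro m hm
      by_contra h
      push_neg at h
      rcases Nat.eq_or_lt_of_le h with rfl | h2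
      · apply hm
        simp [hρ, Equiv.Perm.mul_apply, Equiv.swap_apply_right]
      · have hfix : π m = m := by
          by_contra h3
          have := hπ m h3; omega
        apply hm
        simp only [hρ, Equiv.Perm.mul_apply, hfix]
        exact Equiv.swap_apply_of_ne_of_ne (by omega) (by omega)
    have hdecomp : ∀ m, π m = Equiv.swap N (π N) (ρ m) := by
      intro m
      simp [hρ, Equiv.Perm.mul_apply, Equiv.swap_apply_self]
    have h1 : (fun m => c (π m))
        = (fun m => (fun m' => c (Equiv.swap N (π N) m')) (ρ m)) := by
      funext m; rw [hdecomp m]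
    rw [h1, ih ρ hρsupp (fun m' => c (Equiv.swap N (π N) m'))]
    exact kostka_swap_any shape hsh N (π N) c


/-- key step of Proposition A.4: if the skew diagrams of
`μ⁰/ν⁰` and `μ¹/ν¹` have the same connected components, related by a row
permutation `σ` that is order-preserving within each component, then for every
`w'` in the Young subgroup of `μ⁰/ν⁰`,
`(μ⁰+δ-w'(ν⁰+δ))_k = (μ¹+δ-(σw'σ⁻¹)(ν¹+δ))_{σ(k)}`, and hence the
corresponding Kostka numbers agree for all partitions. -/
theorem stmt17 {n : ℕ} (μ0 ν0 μ1 ν1 : Fin n → ℕ)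
    (hμ0 : Antitone μ0) (hν0 : Antitone ν0) (hμ1 : Antitone μ1) (hν1 : Antitone ν1)
    (hle0 : ∀ i, ν0 i ≤ μ0 i) (hle1 : ∀ i, ν1 i ≤ μ1 i)
    (σ : Perm (Fin n))
    (hσ : ∀ s t : Fin n, SameComp μ0 ν0 s t →
      (((σ t : ℕ) : ℤ) - ((σ s : ℕ) : ℤ) = ((t : ℕ) : ℤ) - ((s : ℕ) : ℤ)))
    (hrows : ∀ s t : Fin n, SameComp μ0 ν0 s t →
      ((μ1 (σ t) : ℤ) - (ν1 (σ s) : ℤ) = (μ0 t : ℤ) - (ν0 s : ℤ)))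
    (w' : Perm (Fin n)) (hw' : ∀ j : Fin n, SameComp μ0 ν0 j (w' j)) :
    (∀ j : Fin n,
        hatSeq μ0 ν0 w' j = hatSeq μ1 ν1 (σ * w' * σ⁻¹) (σ j)) ∧
    ∀ shape : ℕ → ℕ, Antitone shape →
      kostkaZ shape (extendSeq (hatSeq μ0 ν0 w')) =
        kostkaZ shape (extendSeq (hatSeq μ1 ν1 (σ * w' * σ⁻¹))) := by
  classical
  have part1 : ∀ j : Fin n,
      hatSeq μ0 ν0 w' j = hatSeq μ1 ν1 (σ * w' * σ⁻¹) (σ j) := by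
    intro j
    have hsc : SameComp μ0 ν0 (w'⁻¹ j) j := by simpa using hw' (w'⁻¹ j)
    have h1 := hσ _ _ hsc
    have h2 := hrows _ _ hsc
    have hinv : (σ * w' * σ⁻¹)⁻¹ (σ j) = σ (w'⁻¹ j) := by
      simp [mul_inv_rev, Equiv.Perm.mul_apply]
    simp only [hatSeq, hinv, deltaSeq]
    linarith
  refine ⟨part1, ?_⟩
  intro shape hshape
  set π : Perm ℕ := Equiv.Perm.extendDomain σ⁻¹ (Fin.equivSubtype) with hπ
  have hπlt : ∀ (m : ℕ) (h : m < n), π m = ((σ⁻¹ ⟨m, h⟩ : Fin n) : ℕ) := by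
    intro m h
    have := Equiv.Perm.extendDomain_apply_subtype σ⁻¹ (Fin.equivSubtype) (b := m) h
    rw [hπ, this]
    simp [Fin.equivSubtype]
  have hπge : ∀ m, ¬ m < n → π m = m := fun m h =>
    Equiv.Perm.extendDomain_apply_not_subtype σ⁻¹ Fin.equivSubtype h
  have hsupp : ∀ m, π m ≠ m → m < n := fun m hm => by
    by_contra h; exact hm (hπge m h)
  have hcomp : extendSeq (hatSeq μ1 ν1 (σ * w' * σ⁻¹))
      = fun m => extendSeq (hatSeq μ0 ν0 w') (π m) := by
    funext m
    by_cases h : m < n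
    · rw [hπlt m h]
      have hlt : ((σ⁻¹ ⟨m, h⟩ : Fin n) : ℕ) < n := (σ⁻¹ ⟨m, h⟩).isLt
      simp only [extendSeq]
      rw [dif_pos h, dif_pos hlt]
      have he : (⟨((σ⁻¹ ⟨m, h⟩ : Fin n) : ℕ), hlt⟩ : Fin n) = σ⁻¹ ⟨m, h⟩ := by
        apply Fin.ext; rfl
      rw [he, part1 (σ⁻¹ ⟨m, h⟩)]
      congr 1
      simp
    · rw [hπge m h]
      simp only [extendSeq]
      rw [dif_neg h, dif_neg h]
  have hnn : (∀ m, 0 ≤ extendSeq (hatSeq μ0 ν0 w') m) ↔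
      (∀ m, 0 ≤ extendSeq (hatSeq μ1 ν1 (σ * w' * σ⁻¹)) m) := by
    constructor
    · intro h m
      rw [hcomp]
      exact h _
    · intro h m
      have hh := h (π⁻¹ m)
      rw [hcomp] at hh
      simpa using hh
  unfold kostkaZ
  by_cases hpos : ∀ m, 0 ≤ extendSeq (hatSeq μ0 ν0 w') m
  · rw [if_pos hpos, if_pos (hnn.mp hpos)]
    have hfun : (fun m => (extendSeq (hatSeq μ1 ν1 (σ * w' * σ⁻¹)) m).toNat)
        = fun m => (fun m' => (extendSeq (hatSeq μ0 ν0 w') m').toNat) (π m) := by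
      funext m; rw [hcomp]
    rw [hfun]
    exact (kostka_perm shape hshape n π hsupp _).symm
  · rw [if_neg hpos, if_neg (fun hc => hpos (hnn.mpr hc))]
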